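/- For every positive integer n, log n = 2 ∑_{r=2}^{n} (−1)^r g(r) p(n, r−1), where g(r) := ∑_{ℓ=2}^{r} (−1)^ℓ ℓ² log ℓ / ((r+ℓ)! (r−ℓ)!) and p(x,s) := ∏_{i=1}^{s} (x² − i²). (The sum may be taken over all r ≥ 2 since p(n, r−1) = 0 for r − 1 ≥ n.) -/

import Mathlib

open scoped BigOperators

namespace PaperStmt

/-- `p(x, s) := ∏_{i=1}^{s} (x² - i²)`, with `p(x, 0) = 1`. -/
def p (x : ℝ) (s : ℕ) : ℝ := ∏ i ∈ Finset.Icc 1 s, (x ^ 2 - (i : ℝ) ^ 2)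

/-- `g(r) := ∑_{ℓ=2}^{r} (-1)^ℓ ℓ² log ℓ / ((r+ℓ)! (r-ℓ)!)`. -/
noncomputable def g (r : ℕ) : ℝ :=
  ∑ ℓ ∈ Finset.Icc 2 r,
    (-1 : ℝ) ^ ℓ * (ℓ : ℝ) ^ 2 * Real.log ℓ
      / ((Nat.factorial (r + ℓ) : ℝ) * (Nat.factorial (r - ℓ) : ℝ))

/-- Alternating binomial transform of shifted binomial coefficients. -/
private def S (m j b : ℕ) : ℤ :=
  ∑ k ∈ Finset.range (m+1), (-1:ℤ)^k * (m.choose k) * ((b+k).choose j)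

private lemma S_rec (m j b : ℕ) : S (m+1) j b = S m j b - S m j (b+1) := by
  have hB : S m j b = (b.choose j : ℤ) +
      ∑ k ∈ Finset.range m, (-1:ℤ)^(k+1) * (m.choose (k+1)) * ((b+(k+1)).choose j) := by
    rw [S, Finset.sum_range_succ']
    simp [Nat.choose_zero_right]
    ring
  rw [S, Finset.sum_range_succ']
  have h1 : ∀ k, ((m+1).choose (k+1) : ℤ) = (m.choose k : ℤ) + (m.choose (k+1) : ℤ) := by
    intro k; exact_mod_cast congrArg (Nat.cast : ℕ → ℤ) (Nat.choose_succ_succ m k)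
  have : ∑ k ∈ Finset.range (m+1), (-1:ℤ)^(k+1) * ((m+1).choose (k+1)) * ((b+(k+1)).choose j)
      = (∑ k ∈ Finset.range (m+1), (-1:ℤ)^(k+1) * (m.choose k) * ((b+1+k).choose j))
      + ∑ k ∈ Finset.range (m+1), (-1:ℤ)^(k+1) * (m.choose (k+1)) * ((b+(k+1)).choose j) := by
    rw [← Finset.sum_add_distrib]
    apply Finset.sum_congr rfl
    intro k _
    rw [h1]
    have : b + (k+1) = b + 1 + k := by ring
    rw [this]
    ring
  rw [this]
  have hlast : ∑ k ∈ Finset.range (m+1), (-1:ℤ)^(k+1) * (m.choose (k+1)) * ((b+(k+1)).choose j)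
      = ∑ k ∈ Finset.range m, (-1:ℤ)^(k+1) * (m.choose (k+1)) * ((b+(k+1)).choose j) := by
    rw [Finset.sum_range_succ, Nat.choose_succ_self]
    push_cast; ring
  rw [hlast]
  have hS1 : ∑ k ∈ Finset.range (m+1), (-1:ℤ)^(k+1) * (m.choose k) * ((b+1+k).choose j)
      = - S m j (b+1) := by
    rw [S, ← Finset.sum_neg_distrib]
    apply Finset.sum_congr rfl; intro k _; ring
  rw [hS1]
  have : ∑ k ∈ Finset.range m, (-1:ℤ)^(k+1) * (m.choose (k+1)) * ((b+(k+1)).choose j)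
      = S m j b - (b.choose j : ℤ) := by rw [hB]; ring
  rw [this]
  simp [Nat.choose_zero_right]
  ring

private lemma S_zero : ∀ m j b, j < m → S m j b = 0 := by
  intro m
  induction m with
  | zero => intro j b h; omega
  | succ m ih =>
    intro j b h
    rw [S_rec]
    cases j with
    | zero =>
      have : ∀ c : ℕ, S m 0 c = ∑ k ∈ Finset.range (m+1), (-1:ℤ)^k * (m.choose k) := by
        intro c; rw [S]; apply Finset.sum_congr rfl; intro k _
        rw [Nat.choose_zero_right]; ring
      rw [this b, this (b+1)]; ring
    | succ j' =>
      have hj' : j' < m := by omega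
      have hsplit : S m (j'+1) (b+1) = S m j' b + S m (j'+1) b := by
        rw [S, S, S, ← Finset.sum_add_distrib]
        apply Finset.sum_congr rfl; intro k _
        have : (b+1+k) = (b+k) + 1 := by ring
        rw [this]
        have : ((b+k+1).choose (j'+1) : ℤ) = ((b+k).choose j' : ℤ) + ((b+k).choose (j'+1) : ℤ) := by
          exact_mod_cast congrArg (Nat.cast : ℕ → ℤ) (Nat.choose_succ_succ (b+k) j')
        rw [this]; ring
      rw [hsplit, ih j' b hj']
      ring

private lemma p_succ (x : ℝ) (s : ℕ) : p x (s+1) = p x s * (x^2 - ((s+1:ℕ) : ℝ)^2) := by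
  rw [p, p, Finset.prod_Icc_succ_top (by omega)]

private lemma p_formula : ∀ s : ℕ, ∀ n : ℕ, s + 1 ≤ n →
    p n s * ((n.factorial : ℝ) * ((n - (s+1)).factorial : ℝ))
      = ((n + s).factorial : ℝ) * ((n - 1).factorial : ℝ) := by
  intro s
  induction s with
  | zero =>
    intro n h
    simp [p]
  | succ s ih =>
    intro n h
    set d := n - (s+2) with hdd
    have hd1 : n - (s+1) = d + 1 := by omega
    have hn : (n : ℝ) = (s:ℝ) + 2 + (d:ℝ) := by
      have : n = s + 2 + d := by omega
      exact_mod_cast congrArg (Nat.cast : ℕ → ℝ) this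
    have IH := ih n (by omega)
    rw [hd1] at IH
    have hfd : (((d+1).factorial : ℕ) : ℝ) = ((d:ℝ)+1) * (d.factorial : ℝ) := by
      rw [Nat.factorial_succ]; push_cast; ring
    rw [hfd] at IH
    rw [p_succ]
    have hfns : (((n + (s+1)).factorial : ℕ) : ℝ) = ((n:ℝ)+(s:ℝ)+1) * ((n+s).factorial : ℝ) := by
      have : n + (s+1) = (n+s) + 1 := by ring
      rw [this, Nat.factorial_succ]; push_cast; ring
    rw [hfns]
    have hsq : (n:ℝ)^2 - (((s+1:ℕ)):ℝ)^2 = ((d:ℝ)+1) * ((n:ℝ)+(s:ℝ)+1) := by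
      push_cast
      rw [hn]; ring
    rw [hsq]
    linear_combination ((n:ℝ)+(s:ℝ)+1) * IH

private lemma core (ℓ n : ℕ) (h2 : 2 ≤ ℓ) (hn : ℓ ≤ n) :
    ∑ r ∈ Finset.Icc ℓ n, (-1:ℝ)^r * p n (r-1) / (((r+ℓ).factorial : ℝ) * ((r-ℓ).factorial : ℝ))
      = if ℓ = n then (-1:ℝ)^n / (2 * (n:ℝ)^2) else 0 := by
  have key : ∀ r : ℕ, ℓ ≤ r → r ≤ n →
      p n (r-1) = ((n + r - 1).factorial : ℝ) * ((n-1).factorial : ℝ)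
        / ((n.factorial : ℝ) * ((n - r).factorial : ℝ)) := by
    intro r h1 h2'
    have hs : (r - 1) + 1 = r := by omega
    have hp := p_formula (r-1) n (by omega)
    rw [hs] at hp
    have hrw : n + (r - 1) = n + r - 1 := by omega
    rw [hrw] at hp
    rw [eq_div_iff (by positivity)]
    linarith [hp]
  rw [← Finset.Ico_add_one_right_eq_Icc, Finset.sum_Ico_eq_sum_range]
  by_cases hcase : ℓ = n
  · subst hcase
    have : ℓ + 1 - ℓ = 1 := by omega
    rw [this, Finset.sum_range_one]
    simp only [if_pos rfl, add_zero, if_true]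
    rw [key ℓ le_rfl le_rfl]
    have e0 : ℓ - ℓ = 0 := by omega
    rw [e0, Nat.factorial_zero]
    have e1 : ℓ + ℓ - 1 + 1 = ℓ + ℓ := by omega
    have f1 : ((ℓ+ℓ).factorial : ℝ) = (↑ℓ + ↑ℓ) * ((ℓ + ℓ - 1).factorial : ℝ) := by
      rw [← e1, Nat.factorial_succ]; push_cast [e1]; ring
    have f2 : (ℓ.factorial : ℝ) = (ℓ:ℝ) * ((ℓ-1).factorial : ℝ) := by
      have : (ℓ - 1) + 1 = ℓ := by omega
      rw [← this, Nat.factorial_succ]; push_cast [this]; ring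
    rw [f1, f2]
    have hℓ : (ℓ:ℝ) ≠ 0 := by positivity
    have h3 : ((ℓ+ℓ-1).factorial : ℝ) ≠ 0 := by positivity
    have h4 : ((ℓ-1).factorial : ℝ) ≠ 0 := by positivity
    field_simp
    ring
  · have hlt : ℓ < n := lt_of_le_of_ne hn hcase
    rw [if_neg hcase]
    set m := n - ℓ with hm
    set b := n + ℓ - 1 with hb
    have hrange : n + 1 - ℓ = m + 1 := by omega
    rw [hrange]
    have hterm : ∀ k ∈ Finset.range (m+1),
        (-1:ℝ)^(ℓ+k) * p n (ℓ+k-1) / (((ℓ+k+ℓ).factorial : ℝ) * ((ℓ+k-ℓ).factorial : ℝ))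
          = ((-1:ℝ)^ℓ * ((n-1).factorial : ℝ) * (((m-1).factorial : ℝ)) / ((n.factorial : ℝ) * (m.factorial : ℝ)))
            * (((-1:ℤ)^k * (m.choose k) * ((b+k).choose (m-1)) : ℤ) : ℝ) := by
      intro k hk
      have hkm : k ≤ m := by simp at hk; omega
      have e4 : ℓ + k - ℓ = k := by omega
      have e5 : ℓ + k + ℓ = 2*ℓ + k := by ring
      rw [e4, e5]
      rw [key (ℓ+k) (by omega) (by omega)]
      have e1 : n - (ℓ+k) = m - k := by omega
      have e2 : n + (ℓ + k) - 1 = b + k := by omega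
      rw [e1, e2]
      have hjb : m - 1 ≤ b + k := by omega
      have e3 : b + k - (m-1) = 2*ℓ + k := by omega
      have hc1 := Nat.choose_mul_factorial_mul_factorial hkm
      have hc2 := Nat.choose_mul_factorial_mul_factorial hjb
      rw [e3] at hc2
      have hc1' : ((m.choose k : ℕ) : ℝ) * (k.factorial : ℝ) * ((m-k).factorial : ℝ) = (m.factorial : ℝ) := by
        exact_mod_cast congrArg (Nat.cast : ℕ → ℝ) hc1
      have hc2' : (((b+k).choose (m-1) : ℕ) : ℝ) * ((m-1).factorial : ℝ) * ((2*ℓ+k).factorial : ℝ) = ((b+k).factorial : ℝ) := by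
        exact_mod_cast congrArg (Nat.cast : ℕ → ℝ) hc2
      have hpow : (-1:ℝ)^(ℓ+k) = (-1:ℝ)^ℓ * (-1:ℝ)^k := pow_add (-1) ℓ k
      have n1 : ((n.factorial : ℕ) : ℝ) ≠ 0 := by positivity
      have n2 : (((m-k).factorial : ℕ) : ℝ) ≠ 0 := by positivity
      have n3 : (((2*ℓ+k).factorial : ℕ) : ℝ) ≠ 0 := by positivity
      have n4 : ((k.factorial : ℕ) : ℝ) ≠ 0 := by positivity
      have n5 : ((m.factorial : ℕ) : ℝ) ≠ 0 := by positivity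
      have n6 : (((m-1).factorial : ℕ) : ℝ) ≠ 0 := by positivity
      have hC1 : ((m.choose k : ℕ) : ℝ) = (m.factorial : ℝ) / ((k.factorial : ℝ) * ((m-k).factorial : ℝ)) := by
        rw [eq_div_iff (by positivity)]
        linear_combination hc1'
      have hC2 : (((b+k).choose (m-1) : ℕ) : ℝ) = ((b+k).factorial : ℝ) / (((m-1).factorial : ℝ) * ((2*ℓ+k).factorial : ℝ)) := by
        rw [eq_div_iff (by positivity)]
        linear_combination hc2'
      push_cast
      push_cast at hC1 hC2
      rw [hpow, hC1, hC2]
      field_simp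
    rw [Finset.sum_congr rfl hterm, ← Finset.mul_sum]
    have : ∑ k ∈ Finset.range (m+1), (((-1:ℤ)^k * (m.choose k) * ((b+k).choose (m-1)) : ℤ) : ℝ)
        = ((S m (m-1) b : ℤ) : ℝ) := by
      rw [S]; push_cast; ring
    rw [this, S_zero m (m-1) b (by omega)]
    simp

/-- For every positive integer `n`, `log n = 2 ∑_{r=2}^{n} (-1)^r g(r) p(n, r-1)`. -/
theorem stmt19 (n : ℕ) (hn : 1 ≤ n) :
    Real.log n = 2 * ∑ r ∈ Finset.Icc 2 n, (-1 : ℝ) ^ r * g r * p n (r - 1) := by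
  rcases eq_or_lt_of_le hn with h1 | h1
  · rw [← h1]
    norm_num
  · have hn2 : 2 ≤ n := h1
    have step1 : ∀ r ∈ Finset.Icc 2 n, (-1:ℝ)^r * g r * p n (r-1)
        = ∑ ℓ ∈ Finset.Icc 2 r, (-1:ℝ)^ℓ * (ℓ:ℝ)^2 * Real.log ℓ *
            ((-1:ℝ)^r * p n (r-1) / (((r+ℓ).factorial : ℝ) * ((r-ℓ).factorial : ℝ))) := by
      intro r _
      rw [g, Finset.mul_sum, Finset.sum_mul]
      apply Finset.sum_congr rfl; intro ℓ _
      ring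
    rw [Finset.sum_congr rfl step1]
    have hswap : (∑ r ∈ Finset.Icc 2 n, ∑ ℓ ∈ Finset.Icc 2 r,
          (-1:ℝ)^ℓ * (ℓ:ℝ)^2 * Real.log ℓ *
            ((-1:ℝ)^r * p n (r-1) / (((r+ℓ).factorial : ℝ) * ((r-ℓ).factorial : ℝ))))
        = ∑ ℓ ∈ Finset.Icc 2 n, ∑ r ∈ Finset.Icc ℓ n,
            (-1:ℝ)^ℓ * (ℓ:ℝ)^2 * Real.log ℓ *
            ((-1:ℝ)^r * p n (r-1) / (((r+ℓ).factorial : ℝ) * ((r-ℓ).factorial : ℝ))) := by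
      apply Finset.sum_comm'
      intro r ℓ
      simp only [Finset.mem_Icc]
      omega
    rw [hswap]
    have step2 : ∀ ℓ ∈ Finset.Icc 2 n, (∑ r ∈ Finset.Icc ℓ n,
        (-1:ℝ)^ℓ * (ℓ:ℝ)^2 * Real.log ℓ *
            ((-1:ℝ)^r * p n (r-1) / (((r+ℓ).factorial : ℝ) * ((r-ℓ).factorial : ℝ))))
        = if ℓ = n then (-1:ℝ)^ℓ * (ℓ:ℝ)^2 * Real.log ℓ * ((-1:ℝ)^n / (2 * (n:ℝ)^2)) else 0 := by
      intro ℓ hℓ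
      simp only [Finset.mem_Icc] at hℓ
      rw [← Finset.mul_sum, core ℓ n hℓ.1 hℓ.2]
      by_cases h : ℓ = n
      · rw [if_pos h, if_pos h]
      · rw [if_neg h, if_neg h, mul_zero]
    rw [Finset.sum_congr rfl step2, Finset.sum_ite_eq' (Finset.Icc 2 n) n]
    rw [if_pos (by simp only [Finset.mem_Icc]; omega)]
    have hsgn : (-1:ℝ)^(n*2) = 1 := Even.neg_one_pow ⟨n, by ring⟩
    have hnne : (n:ℝ) ≠ 0 := by positivity
    field_simp
    linear_combination (-Real.log n) * hsgn

end PaperStmt
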